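/- Let X₁,…,X_n be independent nonnegative random variables with E[X_i²] < ∞, let X = ∑_i X_i and S² = ∑_i E[X_i²]. Then for any t > 0, P(X ≤ E[X] − t) ≤ exp(−t²/(2S²)). -/

import Mathlib

open MeasureTheory ProbabilityTheory

lemma exp_neg_le (x : ℝ) (hx : 0 ≤ x) : Real.exp (-x) ≤ 1 - x + x ^ 2 / 2 := by
  set f : ℝ → ℝ := fun y => 1 - y + y ^ 2 / 2 - Real.exp (-y) with hf
  have hderiv : ∀ y : ℝ, HasDerivAt f (-1 + y + Real.exp (-y)) y := by
    intro y
    have h1 : HasDerivAt (fun y : ℝ => 1 - y + y ^ 2 / 2) (-1 + y) y := by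
      have := ((hasDerivAt_const y (1:ℝ)).sub (hasDerivAt_id y)).add
        (((hasDerivAt_pow 2 y)).div_const 2)
      exact this.congr_deriv (by norm_num <;> ring)
    have h2 : HasDerivAt (fun y : ℝ => Real.exp (-y)) (-Real.exp (-y)) y := by
      exact ((Real.hasDerivAt_exp (-y)).comp y ((hasDerivAt_id y).neg)).congr_deriv (by simp)
    exact (h1.sub h2).congr_deriv (by ring)
  have hmono : MonotoneOn f (Set.Ici (0:ℝ)) := by
    apply monotoneOn_of_deriv_nonneg (convex_Ici 0)
    · exact Continuous.continuousOn (by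
        have : Continuous f := by
          simp only [hf]; fun_prop
        exact this)
    · intro y _
      exact (hderiv y).differentiableAt.differentiableWithinAt
    · intro y hy
      rw [(hderiv y).deriv]
      have := Real.add_one_le_exp (-y)
      linarith
  have h0 : f 0 = 0 := by simp [hf]
  have := hmono (Set.self_mem_Ici) (Set.mem_Ici.2 hx) hx
  rw [h0] at this
  simp only [hf] at this
  linarith

lemma mgf_le {Ω : Type*} [MeasurableSpace Ω] (P : Measure Ω) [IsProbabilityMeasure P]
    (Y : Ω → ℝ) (hm : Measurable Y) (hnn : ∀ ω, 0 ≤ Y ω) (hL2 : MemLp Y 2 P)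
    (l : ℝ) (hl : 0 < l) :
    mgf Y P (-l) ≤ Real.exp (-l * ∫ ω, Y ω ∂P + l ^ 2 * (∫ ω, (Y ω) ^ 2 ∂P) / 2) := by
  have hint1 : Integrable Y P := hL2.integrable one_le_two
  have hint2 : Integrable (fun ω => (Y ω) ^ 2) P := by
    simpa [pow_two] using hL2.integrable_sq
  have hbound : ∀ ω, Real.exp (-l * Y ω) ≤ 1 - l * Y ω + (l * Y ω) ^ 2 / 2 := by
    intro ω
    have := exp_neg_le (l * Y ω) (mul_nonneg hl.le (hnn ω))
    simpa [neg_mul] using this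
  have hg : Integrable (fun ω => 1 - l * Y ω + (l * Y ω) ^ 2 / 2) P := by
    refine ((integrable_const (1:ℝ)).sub (hint1.const_mul l)).add ?_
    have : Integrable (fun ω => l ^ 2 * (Y ω) ^ 2 / 2) P := (hint2.const_mul _).div_const 2
    simpa [mul_pow] using this
  have hmgf : mgf Y P (-l) ≤ ∫ ω, (1 - l * Y ω + (l * Y ω) ^ 2 / 2) ∂P := by
    unfold mgf
    refine integral_mono_of_nonneg (ae_of_all _ fun ω => (Real.exp_pos _).le) hg ?_
    exact ae_of_all _ fun ω => hbound ω
  have heq : ∫ ω, (1 - l * Y ω + (l * Y ω) ^ 2 / 2) ∂P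
      = 1 - l * ∫ ω, Y ω ∂P + l ^ 2 * (∫ ω, (Y ω) ^ 2 ∂P) / 2 := by
    have hA : Integrable (fun ω => 1 - l * Y ω) P :=
      (integrable_const (1:ℝ)).sub (hint1.const_mul l)
    rw [integral_add hA (by
        have : Integrable (fun ω => l ^ 2 * (Y ω) ^ 2 / 2) P := (hint2.const_mul _).div_const 2
        simpa [mul_pow] using this),
      integral_sub (integrable_const 1) (hint1.const_mul l), integral_const]
    simp only [probReal_univ, smul_eq_mul, one_mul]
    rw [integral_const_mul]
    congr 1
    simp_rw [mul_pow]
    rw [integral_div, integral_const_mul]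
  refine hmgf.trans (heq.le.trans ?_)
  have := Real.add_one_le_exp (-l * ∫ ω, Y ω ∂P + l ^ 2 * (∫ ω, (Y ω) ^ 2 ∂P) / 2)
  linarith

/-- Maurer's lower-tail inequality for sums of independent nonnegative
random variables with finite second moments. -/
theorem stmt9 {Ω : Type*} [MeasurableSpace Ω] (P : Measure Ω) [IsProbabilityMeasure P]
    (n : ℕ) (X : Fin n → Ω → ℝ) (hmeas : ∀ i, Measurable (X i))
    (hnonneg : ∀ i ω, 0 ≤ X i ω)
    (hL2 : ∀ i, MemLp (X i) 2 P)
    (hindep : iIndepFun X P)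
    (t : ℝ) (ht : 0 < t) :
    P {ω | ∑ i, X i ω ≤ (∑ i, ∫ ω, X i ω ∂P) - t}
      ≤ ENNReal.ofReal (Real.exp (-t ^ 2 / (2 * ∑ i, ∫ ω, (X i ω) ^ 2 ∂P))) := by
  set S : ℝ := ∑ i, ∫ ω, (X i ω) ^ 2 ∂P with hS
  have hSnn : 0 ≤ S := Finset.sum_nonneg fun i _ =>
    integral_nonneg fun ω => sq_nonneg _
  rcases eq_or_lt_of_le hSnn with h0 | hSpos
  · rw [← h0]
    simp only [mul_zero, div_zero, Real.exp_zero, ENNReal.ofReal_one]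
    exact prob_le_one
  set l : ℝ := t / S with hl
  have hlpos : 0 < l := div_pos ht hSpos
  have hintexp : Integrable (fun ω => Real.exp (-l * (∑ i, X i) ω)) P := by
    refine (integrable_const (1:ℝ)).mono' ?_ (ae_of_all _ fun ω => ?_)
    · exact (Measurable.exp (by fun_prop)).aestronglyMeasurable
    · rw [Real.norm_eq_abs, abs_of_pos (Real.exp_pos _)]
      refine Real.exp_le_one_iff.mpr ?_
      have : (0:ℝ) ≤ (∑ i, X i) ω := by
        simp only [Finset.sum_apply]
        exact Finset.sum_nonneg fun i _ => hnonneg i ω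
      nlinarith
  have hcher := measure_le_le_exp_mul_mgf (μ := P) (X := ∑ i, X i)
    ((∑ i, ∫ ω, X i ω ∂P) - t) (neg_nonpos.mpr hlpos.le) hintexp
  have hmgfsum : mgf (∑ i, X i) P (-l) = ∏ i, mgf (X i) P (-l) :=
    hindep.mgf_sum hmeas Finset.univ
  have hprod : ∏ i, mgf (X i) P (-l)
      ≤ Real.exp (∑ i, (-l * ∫ ω, X i ω ∂P + l ^ 2 * (∫ ω, (X i ω) ^ 2 ∂P) / 2)) := by
    rw [Real.exp_sum]
    exact Finset.prod_le_prod (fun i _ => mgf_nonneg)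
      (fun i _ => mgf_le P (X i) (hmeas i) (hnonneg i) (hL2 i) l hlpos)
  have hsum : ∑ i, (-l * ∫ ω, X i ω ∂P + l ^ 2 * (∫ ω, (X i ω) ^ 2 ∂P) / 2)
      = -l * (∑ i, ∫ ω, X i ω ∂P) + l ^ 2 * S / 2 := by
    rw [Finset.sum_add_distrib, ← Finset.mul_sum, hS, ← Finset.sum_div, ← Finset.mul_sum]
  have hkey : (P {ω | ∑ i, X i ω ≤ (∑ i, ∫ ω, X i ω ∂P) - t}).toReal
      ≤ Real.exp (-t ^ 2 / (2 * S)) := by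
    have hE : {ω | (∑ i, X i) ω ≤ (∑ i, ∫ ω, X i ω ∂P) - t}
        = {ω | ∑ i, X i ω ≤ (∑ i, ∫ ω, X i ω ∂P) - t} := by
      simp [Finset.sum_apply]
    rw [hE] at hcher
    refine hcher.trans ?_
    rw [hmgfsum]
    calc Real.exp (- -l * ((∑ i, ∫ ω, X i ω ∂P) - t)) * ∏ i, mgf (X i) P (-l)
        ≤ Real.exp (- -l * ((∑ i, ∫ ω, X i ω ∂P) - t)) *
          Real.exp (-l * (∑ i, ∫ ω, X i ω ∂P) + l ^ 2 * S / 2) := by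
          refine mul_le_mul_of_nonneg_left ?_ (Real.exp_pos _).le
          rw [← hsum]; exact hprod
      _ = Real.exp (-t ^ 2 / (2 * S)) := by
          rw [← Real.exp_add]
          congr 1
          rw [hl]
          field_simp
          ring
  rw [ENNReal.le_ofReal_iff_toReal_le (measure_ne_top P _) (Real.exp_pos _).le]
  exact hkey
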